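/- Let N_1(X) = (1+|X|^{d+1})^{-1} on ℝ^d. Then N_1 ∈ L^1(ℝ^d), and there exists a constant C_0 > 1 such that C_0^{-1} N_1(X) ≤ (N_1 * N_1)(X) ≤ C_0 N_1(X) for all X ∈ ℝ^d, where * denotes convolution. -/

import Mathlib

open MeasureTheory

lemma aux_pow_one_add (n : ℕ) {t : ℝ} (ht : 0 ≤ t) :
    (1 + t) ^ n ≤ 2 ^ n * (1 + t ^ n) := by
  calc (1 + t) ^ n ≤ (2 * max 1 t) ^ n := by
        apply pow_le_pow_left₀ (by positivity)
        rcases le_total t 1 with h | h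
        · rw [max_eq_left h]; linarith
        · rw [max_eq_right h]; linarith
    _ = 2 ^ n * (max 1 t) ^ n := mul_pow _ _ _
    _ ≤ 2 ^ n * (1 + t ^ n) := by
        apply mul_le_mul_of_nonneg_left _ (by positivity)
        rcases le_total t 1 with h | h
        · rw [max_eq_left h, one_pow]
          have : (0:ℝ) ≤ t ^ n := by positivity
          linarith
        · rw [max_eq_right h]
          linarith

lemma aux_inv_le_mul_inv {a b K : ℝ} (ha : 0 < a) (hK : 0 < K) (h : a ≤ K * b) :
    b⁻¹ ≤ K * a⁻¹ := by
  have hb : 0 < b := by nlinarith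
  have h1 : a / K ≤ b := (div_le_iff₀' hK).mpr h
  have h2 : b⁻¹ ≤ (a / K)⁻¹ := inv_anti₀ (div_pos ha hK) h1
  calc b⁻¹ ≤ (a / K)⁻¹ := h2
    _ = K * a⁻¹ := by rw [inv_div, div_eq_mul_inv]

theorem stmt2 (d : ℕ) (hd : 1 ≤ d)
    (N1 : EuclideanSpace ℝ (Fin d) → ℝ)
    (hN1 : ∀ X, N1 X = (1 + ‖X‖ ^ (d + 1))⁻¹) :
    Integrable N1 (volume : Measure (EuclideanSpace ℝ (Fin d))) ∧
    ∃ C0 > 1, ∀ X : EuclideanSpace ℝ (Fin d),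
      C0⁻¹ * N1 X ≤ (∫ Y, N1 Y * N1 (X - Y)) ∧
      (∫ Y, N1 Y * N1 (X - Y)) ≤ C0 * N1 X := by
  have hpos : ∀ X : EuclideanSpace ℝ (Fin d), (0:ℝ) < 1 + ‖X‖ ^ (d + 1) :=
    fun X => by positivity
  have hN1pos : ∀ X, 0 < N1 X := fun X => by rw [hN1]; positivity
  have hN1le1 : ∀ X, N1 X ≤ 1 := fun X => by
    rw [hN1]
    exact inv_le_one_of_one_le₀ (by nlinarith [pow_nonneg (norm_nonneg X) (d+1)])
  have hcont : Continuous N1 := by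
    have h : N1 = fun X : EuclideanSpace ℝ (Fin d) => (1 + ‖X‖ ^ (d + 1))⁻¹ := funext hN1
    rw [h]
    exact (continuous_const.add (continuous_norm.pow _)).inv₀ (fun X => (hpos X).ne')
  -- Integrability
  have hint : Integrable N1 (volume : Measure (EuclideanSpace ℝ (Fin d))) := by
    have h2 : Integrable (fun x : EuclideanSpace ℝ (Fin d) => (1 + ‖x‖) ^ (-(d + 1 : ℝ)))
        volume := by
      apply integrable_one_add_norm
      simp only [finrank_euclideanSpace, Fintype.card_fin]
      exact lt_add_one (d : ℝ)
    apply (h2.const_mul (2 ^ (d + 1))).mono' hcont.aestronglyMeasurable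
    filter_upwards with x
    have hx : (0:ℝ) ≤ ‖x‖ := norm_nonneg x
    have hrw : (1 + ‖x‖) ^ (-(d + 1 : ℝ)) = ((1 + ‖x‖) ^ (d + 1))⁻¹ := by
      rw [Real.rpow_neg (by linarith), ← Real.rpow_natCast (1 + ‖x‖) (d + 1)]
      norm_num
    rw [Real.norm_eq_abs, abs_of_pos (hN1pos x), hrw, hN1]
    exact aux_inv_le_mul_inv (by positivity) (by positivity) (aux_pow_one_add (d+1) hx)
  refine ⟨hint, ?_⟩
  -- constants
  set I := ∫ Y : EuclideanSpace ℝ (Fin d), N1 Y with hI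
  have hI0 : 0 ≤ I := integral_nonneg (fun Y => (hN1pos Y).le)
  set B := Metric.ball (0:EuclideanSpace ℝ (Fin d)) 1 with hB
  have hvB : 0 < (volume B).toReal :=
    ENNReal.toReal_pos (Metric.measure_ball_pos volume 0 one_pos).ne' measure_ball_lt_top.ne
  set K : ℝ := 2 ^ (d + 1) + 1 with hK
  have hKpos : (0:ℝ) < K := by positivity
  set c : ℝ := (volume B).toReal / (2 * K) with hc
  have hcpos : 0 < c := div_pos hvB (by positivity)
  set C0 : ℝ := max 2 (max (2 ^ (d + 2) * I) c⁻¹) with hC0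
  have hC0gt1 : 1 < C0 := lt_of_lt_of_le one_lt_two (le_max_left _ _)
  have hC0pos : 0 < C0 := lt_trans one_pos hC0gt1
  refine ⟨C0, hC0gt1, fun X => ?_⟩
  -- key comparison: if ‖W‖ ≤ 2 ‖Z‖ then N1 Z ≤ 2^(d+1) N1 W
  have key : ∀ W Z : EuclideanSpace ℝ (Fin d), ‖W‖ ≤ 2 * ‖Z‖ → N1 Z ≤ 2 ^ (d + 1) * N1 W := by
    intro W Z h
    rw [hN1, hN1]
    apply aux_inv_le_mul_inv (hpos W) (by positivity)
    have h1 : ‖W‖ ^ (d + 1) ≤ (2 * ‖Z‖) ^ (d + 1) := pow_le_pow_left₀ (norm_nonneg W) h _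
    have h2 : (2 * ‖Z‖) ^ (d + 1) = 2 ^ (d + 1) * ‖Z‖ ^ (d + 1) := mul_pow _ _ _
    have h3 : (1:ℝ) ≤ 2 ^ (d + 1) := one_le_pow₀ one_le_two
    nlinarith
  -- integrability of the integrand
  have hintX : Integrable (fun Y : EuclideanSpace ℝ (Fin d) => N1 (X - Y)) volume :=
    hint.comp_sub_left X
  have hmeas : AEStronglyMeasurable (fun Y : EuclideanSpace ℝ (Fin d) => N1 Y * N1 (X - Y))
      volume :=
    (hcont.mul (hcont.comp (continuous_const.sub continuous_id))).aestronglyMeasurable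
  have hmul : Integrable (fun Y : EuclideanSpace ℝ (Fin d) => N1 Y * N1 (X - Y)) volume := by
    apply hint.mono hmeas
    filter_upwards with Y
    rw [Real.norm_eq_abs, Real.norm_eq_abs, abs_of_pos (hN1pos Y),
      abs_of_pos (mul_pos (hN1pos Y) (hN1pos (X - Y)))]
    calc N1 Y * N1 (X - Y) ≤ N1 Y * 1 :=
          mul_le_mul_of_nonneg_left (hN1le1 _) (hN1pos Y).le
      _ = N1 Y := mul_one _
  constructor
  · -- lower bound
    have hptB : ∀ Y ∈ B, (2 * K)⁻¹ * N1 X ≤ N1 Y * N1 (X - Y) := by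
      intro Y hY
      have hYn : ‖Y‖ ≤ 1 := le_of_lt (by simpa [hB] using hY)
      have hY2 : (2:ℝ)⁻¹ ≤ N1 Y := by
        rw [hN1]
        apply inv_anti₀ (hpos Y)
        have : ‖Y‖ ^ (d + 1) ≤ 1 := pow_le_one₀ (norm_nonneg Y) hYn
        linarith
      have hXY : N1 X ≤ K * N1 (X - Y) := by
        rw [hN1, hN1]
        apply aux_inv_le_mul_inv (hpos (X - Y)) hKpos
        have h1 : ‖X - Y‖ ≤ ‖X‖ + 1 := by
          calc ‖X - Y‖ ≤ ‖X‖ + ‖Y‖ := norm_sub_le _ _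
            _ ≤ ‖X‖ + 1 := by linarith
        have h2 : ‖X - Y‖ ^ (d + 1) ≤ (1 + ‖X‖) ^ (d + 1) := by
          apply pow_le_pow_left₀ (norm_nonneg _)
          linarith
        have h3 : (1 + ‖X‖) ^ (d + 1) ≤ 2 ^ (d + 1) * (1 + ‖X‖ ^ (d + 1)) :=
          aux_pow_one_add _ (norm_nonneg X)
        have h4 : (0:ℝ) ≤ ‖X‖ ^ (d + 1) := by positivity
        rw [hK]
        nlinarith
      have hstep : ((2:ℝ) * K)⁻¹ * K = 2⁻¹ := by
        field_simp
      calc (2 * K)⁻¹ * N1 X ≤ (2 * K)⁻¹ * (K * N1 (X - Y)) :=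
            mul_le_mul_of_nonneg_left hXY (by positivity)
        _ = ((2 * K)⁻¹ * K) * N1 (X - Y) := by ring
        _ = 2⁻¹ * N1 (X - Y) := by rw [hstep]
        _ ≤ N1 Y * N1 (X - Y) := mul_le_mul_of_nonneg_right hY2 (hN1pos _).le
    have hCc : C0⁻¹ ≤ c := by
      have h1 : c⁻¹ ≤ C0 := le_trans (le_max_right _ _) (le_max_right _ _)
      have h2 : C0⁻¹ ≤ (c⁻¹)⁻¹ := inv_anti₀ (by positivity) h1
      rwa [inv_inv] at h2
    calc C0⁻¹ * N1 X ≤ c * N1 X := mul_le_mul_of_nonneg_right hCc (hN1pos X).le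
      _ = ∫ _ in B, (2 * K)⁻¹ * N1 X := by
          rw [setIntegral_const, smul_eq_mul, hc]
          field_simp
          rw [measureReal_def, mul_comm]
      _ ≤ ∫ Y in B, N1 Y * N1 (X - Y) := by
          apply setIntegral_mono_on _ hmul.integrableOn measurableSet_ball hptB
          exact (integrableOn_const_iff).mpr (Or.inr measure_ball_lt_top)
      _ ≤ ∫ Y, N1 Y * N1 (X - Y) := by
          apply setIntegral_le_integral hmul
          filter_upwards with Y
          exact mul_nonneg (hN1pos Y).le (hN1pos _).le
  · -- upper bound
    have hpt : ∀ Y : EuclideanSpace ℝ (Fin d),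
        N1 Y * N1 (X - Y) ≤ 2 ^ (d + 1) * N1 X * (N1 Y + N1 (X - Y)) := by
      intro Y
      have hYX : Y + (X - Y) = X := by abel
      have htri : ‖X‖ ≤ ‖Y‖ + ‖X - Y‖ := by
        calc ‖X‖ = ‖Y + (X - Y)‖ := by rw [hYX]
          _ ≤ ‖Y‖ + ‖X - Y‖ := norm_add_le _ _
      rcases le_total ‖Y‖ ‖X - Y‖ with h | h
      · have hk := key X (X - Y) (by linarith)
        have h1 : N1 Y * N1 (X - Y) ≤ N1 Y * (2 ^ (d + 1) * N1 X) :=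
          mul_le_mul_of_nonneg_left hk (hN1pos Y).le
        nlinarith [hN1pos Y, hN1pos (X - Y), hN1pos X, pow_pos (two_pos (α := ℝ)) (d + 1)]
      · have hk := key X Y (by linarith)
        have h1 : N1 Y * N1 (X - Y) ≤ (2 ^ (d + 1) * N1 X) * N1 (X - Y) :=
          mul_le_mul_of_nonneg_right hk (hN1pos _).le
        nlinarith [hN1pos Y, hN1pos (X - Y), hN1pos X, pow_pos (two_pos (α := ℝ)) (d + 1)]
    calc (∫ Y, N1 Y * N1 (X - Y))
        ≤ ∫ Y, 2 ^ (d + 1) * N1 X * (N1 Y + N1 (X - Y)) :=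
          integral_mono hmul ((hint.add hintX).const_mul _) hpt
      _ = 2 ^ (d + 1) * N1 X * (I + I) := by
          rw [integral_const_mul, integral_add hint hintX, integral_sub_left_eq_self N1 volume X]
      _ = (2 ^ (d + 2) * I) * N1 X := by ring
      _ ≤ C0 * N1 X := by
          apply mul_le_mul_of_nonneg_right _ (hN1pos X).le
          exact le_trans (le_max_left _ _) (le_max_right _ _)
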